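/- Let N, n ∈ ℕ with N·log₂ n ≥ e^2000, and let a ≠ b be naturals with a, b ≤ n^N. Then the number of primes p with N·log₂ n < p ≤ (N·log₂ n)² such that a ≡ b (mod p) is at most (N·log₂ n)/log₂(N·log₂ n). -/
import Mathlib

theorem stmt_10 (N n : ℕ) (hL : Real.exp 2000 ≤ (N : ℝ) * Real.logb 2 n)
    (a b : ℕ) (ha : a ≤ n ^ N) (hb : b ≤ n ^ N) (hab : a ≠ b) :
    ({p : ℕ | Nat.Prime p ∧ (N : ℝ) * Real.logb 2 n < (p : ℝ) ∧
        (p : ℝ) ≤ ((N : ℝ) * Real.logb 2 n) ^ 2 ∧ a ≡ b [MOD p]}.ncard : ℝ) ≤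
      ((N : ℝ) * Real.logb 2 n) / Real.logb 2 ((N : ℝ) * Real.logb 2 n) := by
  set L : ℝ := (N : ℝ) * Real.logb 2 n with hLdef
  have hL1 : (1 : ℝ) < L := by
    have h1 : (1 : ℝ) = Real.exp 0 := (Real.exp_zero).symm
    have h2 : Real.exp 0 < Real.exp 2000 := Real.exp_lt_exp.mpr (by norm_num)
    linarith
  have hL0 : (0 : ℝ) < L := by linarith
  have hlogL : 0 < Real.logb 2 L := Real.logb_pos one_lt_two hL1
  have hlogn : 0 < Real.logb 2 (n : ℝ) := by
    by_contra h
    push_neg at h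
    have : L ≤ 0 := mul_nonpos_of_nonneg_of_nonpos (Nat.cast_nonneg N) h
    linarith
  have hn1 : (1 : ℝ) < (n : ℝ) := by
    by_contra h
    push_neg at h
    have := Real.logb_nonpos (by norm_num : (1:ℝ) < 2) (by positivity) h
    linarith
  have hn0 : (0 : ℝ) < (n : ℝ) := by linarith
  set S := {p : ℕ | Nat.Prime p ∧ L < (p : ℝ) ∧ (p : ℝ) ≤ L ^ 2 ∧ a ≡ b [MOD p]} with hSdef
  have hfin : S.Finite := by
    apply Set.Finite.subset (Set.finite_Iic ⌈L ^ 2⌉₊)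
    intro p hp
    have h1 : (p : ℝ) ≤ L ^ 2 := hp.2.2.1
    have h2 : (L ^ 2 : ℝ) ≤ (⌈L ^ 2⌉₊ : ℝ) := Nat.le_ceil _
    have : (p : ℝ) ≤ (⌈L ^ 2⌉₊ : ℝ) := le_trans h1 h2
    exact_mod_cast this
  set F := hfin.toFinset with hFdef
  have hcard : S.ncard = F.card := Set.ncard_eq_toFinset_card _ hfin
  -- the difference
  set d : ℕ := ((a : ℤ) - b).natAbs with hddef
  have hd0 : 0 < d := by
    have : (a : ℤ) - b ≠ 0 := by
      intro h
      apply hab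
      omega
    omega
  have hdle : d ≤ n ^ N := by omega
  have hdvd : ∀ p ∈ F, p ∣ d := by
    intro p hp
    have hp' : p ∈ S := hfin.mem_toFinset.mp hp
    have hmod := (Nat.modEq_iff_dvd).mp hp'.2.2.2
    have : (p : ℤ) ∣ (a : ℤ) - b := (dvd_sub_comm).mp hmod
    have h2 : (p : ℤ).natAbs ∣ ((a : ℤ) - b).natAbs := Int.natAbs_dvd_natAbs.mpr this
    simpa using h2
  have hprod : (∏ p ∈ F, p) ∣ d :=
    Finset.prod_primes_dvd d (fun p hp => (hfin.mem_toFinset.mp hp).1.prime) hdvd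
  have hprodle : (∏ p ∈ F, p) ≤ d := Nat.le_of_dvd hd0 hprod
  -- real inequalities
  have hLpow : L ^ F.card ≤ (∏ p ∈ F, (p : ℝ)) := by
    rw [← Finset.prod_const]
    apply Finset.prod_le_prod
    · intro i _; linarith
    · intro i hi; exact le_of_lt (hfin.mem_toFinset.mp hi).2.1
  have hprodR : (∏ p ∈ F, (p : ℝ)) ≤ ((n : ℝ)) ^ N := by
    have h1 : ((∏ p ∈ F, p : ℕ) : ℝ) ≤ ((n ^ N : ℕ) : ℝ) := by
      exact_mod_cast le_trans hprodle hdle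
    push_cast at h1
    exact h1
  have h2n : (2 : ℝ) ^ Real.logb 2 (n : ℝ) = (n : ℝ) :=
    Real.rpow_logb (by norm_num) (by norm_num) hn0
  have hnN : ((n : ℝ)) ^ N = (2 : ℝ) ^ L := by
    rw [← h2n, ← Real.rpow_natCast ((2:ℝ) ^ Real.logb 2 (n:ℝ)) N,
      ← Real.rpow_mul (by norm_num : (0:ℝ) ≤ 2)]
    rw [hLdef]
    ring_nf
  have h2L : (2 : ℝ) ^ Real.logb 2 L = L :=
    Real.rpow_logb (by norm_num) (by norm_num) hL0
  -- final contradiction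
  by_contra hcon
  push_neg at hcon
  have hm : L < Real.logb 2 L * (S.ncard : ℝ) := by
    rw [div_lt_iff₀ hlogL] at hcon
    linarith [hcon]
  have hLm : L ^ S.ncard = (2 : ℝ) ^ (Real.logb 2 L * (S.ncard : ℝ)) := by
    rw [Real.rpow_mul (by norm_num : (0:ℝ) ≤ 2), h2L, Real.rpow_natCast]
  have hlt : (2 : ℝ) ^ L < (2 : ℝ) ^ (Real.logb 2 L * (S.ncard : ℝ)) :=
    Real.rpow_lt_rpow_left_iff (by norm_num : (1:ℝ) < 2) |>.mpr hm
  rw [← hLm] at hlt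
  rw [hcard] at hlt
  have : L ^ F.card ≤ (2 : ℝ) ^ L := by
    calc L ^ F.card ≤ (∏ p ∈ F, (p : ℝ)) := hLpow
    _ ≤ ((n : ℝ)) ^ N := hprodR
    _ = (2 : ℝ) ^ L := hnN
  linarith
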